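/- Let Γ be a finite group, Γ' a subgroup, and p a prime. If the central idempotent e_{Γ/Γ'} lies in ℤ_(p)[Γ] (i.e., all of its coefficients are p-integral), then p does not divide the index [Γ:Γ']. Equivalently: if e₁ lies in the left ℤ_(p)[Γ]-module ℤ_(p)[Γ]·e₁' ⊆ ℚ[Γ], then p ∤ [Γ:Γ']. -/

import Mathlib

/-- The idempotent `|Λ|⁻¹ ∑_{γ ∈ Λ} γ` of `ℚ[Γ]` attached to a subgroup `Λ ≤ Γ`.
For `Λ = ⊤` this is `e₁`, and for `Λ = Γ'` it is `e₁'`. -/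
noncomputable def subgroupIdem {Γ : Type} [Group Γ] [Finite Γ] (Λ : Subgroup Γ) :
    MonoidAlgebra ℚ Γ :=
  letI : Fintype ↥Λ := Fintype.ofFinite _
  (Nat.card ↥Λ : ℚ)⁻¹ • ∑ γ : ↥Λ, MonoidAlgebra.of ℚ Γ (γ : Γ)

/-- `e` is the central idempotent `e_{Γ/Γ'}` of `ℚ[Γ]` attached to the augmentation
character of the `Γ`-action on `Γ/Γ'`: it is the minimal central idempotent with
`e·e₁ = 0` and `e·e₁' = e₁' - e₁`. -/
def IsAugmentationIdem {Γ : Type} [Group Γ] [Finite Γ] (Γ' : Subgroup Γ)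
    (e : MonoidAlgebra ℚ Γ) : Prop :=
  (e * e = e ∧ ∀ x, e * x = x * e) ∧
    e * subgroupIdem (⊤ : Subgroup Γ) = 0 ∧
    e * subgroupIdem Γ' = subgroupIdem Γ' - subgroupIdem (⊤ : Subgroup Γ) ∧
    ∀ f : MonoidAlgebra ℚ Γ, (f * f = f ∧ ∀ x, f * x = x * f) →
      f * subgroupIdem (⊤ : Subgroup Γ) = 0 →
      f * subgroupIdem Γ' = subgroupIdem Γ' - subgroupIdem (⊤ : Subgroup Γ) →
      e * f = e

lemma mul_subgroupIdem_apply_one {Γ : Type} [Group Γ] [Finite Γ] (Λ : Subgroup Γ)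
    (x : MonoidAlgebra ℚ Γ) :
    letI : Fintype ↥Λ := Fintype.ofFinite _
    (x * subgroupIdem Λ).coeff 1 = (Nat.card ↥Λ : ℚ)⁻¹ * ∑ γ : ↥Λ, x.coeff ((γ : Γ)⁻¹) := by
  letI : Fintype ↥Λ := Fintype.ofFinite _
  unfold subgroupIdem
  simp only [mul_smul_comm, MonoidAlgebra.of_apply]
  rw [MonoidAlgebra.coeff_smul, Finsupp.smul_apply, smul_eq_mul, Finset.mul_sum,
    MonoidAlgebra.coeff_sum, Finset.sum_apply']
  congr 1
  exact Finset.sum_congr rfl fun γ _ => by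
    rw [MonoidAlgebra.coeff_mul_single_apply, mul_one, one_mul]

lemma subgroupIdem_apply_one {Γ : Type} [Group Γ] [Finite Γ] (Λ : Subgroup Γ) :
    (subgroupIdem Λ).coeff 1 = (Nat.card ↥Λ : ℚ)⁻¹ := by
  letI : Fintype ↥Λ := Fintype.ofFinite _
  have h := mul_subgroupIdem_apply_one Λ 1
  rw [one_mul] at h
  rw [h]
  have : ∑ γ : ↥Λ, (1 : MonoidAlgebra ℚ Γ).coeff ((γ : Γ)⁻¹) = 1 := by
    rw [MonoidAlgebra.one_def]
    rw [Finset.sum_eq_single_of_mem (1 : ↥Λ) (Finset.mem_univ _)]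
    · simp
    · intro γ _ hγ
      classical
      rw [MonoidAlgebra.coeff_single, Finsupp.single_apply, if_neg]
      intro hc
      exact hγ (by ext; simpa [eq_comm, inv_eq_one] using hc)
  rw [this, mul_one]

lemma not_dvd_den_sum {p : ℕ} (hp : p.Prime) {ι : Type*} (s : Finset ι) (f : ι → ℚ)
    (h : ∀ i ∈ s, ¬ p ∣ (f i).den) : ¬ p ∣ (∑ i ∈ s, f i).den := by
  induction s using Finset.cons_induction with
  | empty => simp [Nat.Prime.one_lt hp, Nat.dvd_one, Nat.Prime.ne_one hp]
  | cons a s ha ih =>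
    rw [Finset.sum_cons]
    intro hd
    have := (Rat.add_den_dvd (f a) (∑ i ∈ s, f i))
    rcases (Nat.Prime.dvd_mul hp).1 (hd.trans this) with h1 | h2
    · exact h a (Finset.mem_cons_self a s) h1
    · exact ih (fun i hi => h i (Finset.mem_cons_of_mem hi)) h2

/-- If all coefficients of `e_{Γ/Γ'}` are `p`-integral, then `p` does not divide the
index `[Γ:Γ']`. -/
theorem not_dvd_index_of_augIdem_integral {Γ : Type} [Group Γ] [Finite Γ]
    (Γ' : Subgroup Γ) (p : ℕ) (hp : p.Prime) (e : MonoidAlgebra ℚ Γ)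
    (he : IsAugmentationIdem Γ' e) (hint : ∀ γ : Γ, ¬ (p : ℕ) ∣ (e.coeff γ).den) :
    ¬ p ∣ Γ'.index := by
  obtain ⟨-, -, he2, -⟩ := he
  intro hdvd
  letI : Fintype ↥Γ' := Fintype.ofFinite _
  set S : ℚ := ∑ γ : ↥Γ', e.coeff ((γ : Γ)⁻¹) with hS
  have key : (Nat.card ↥Γ' : ℚ)⁻¹ * S = (Nat.card ↥Γ' : ℚ)⁻¹ - (Nat.card Γ : ℚ)⁻¹ := by
    have h := congrArg (fun f : MonoidAlgebra ℚ Γ => f.coeff 1) he2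
    rw [MonoidAlgebra.coeff_sub, Finsupp.sub_apply, mul_subgroupIdem_apply_one, subgroupIdem_apply_one,
      subgroupIdem_apply_one, Subgroup.card_top] at h
    exact h
  have hN'0 : 0 < Nat.card ↥Γ' := Nat.card_pos
  have hN0 : 0 < Nat.card Γ := Nat.card_pos
  have hN' : (Nat.card ↥Γ' : ℚ) ≠ 0 := Nat.cast_ne_zero.2 hN'0.ne'
  have hN : (Nat.card Γ : ℚ) ≠ 0 := Nat.cast_ne_zero.2 hN0.ne'
  have hidx : Γ'.index ≠ 0 := Subgroup.index_ne_zero_of_finite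
  have hI : (Γ'.index : ℚ) ≠ 0 := Nat.cast_ne_zero.2 hidx
  have hrel : (Γ'.index : ℚ) * (Nat.card ↥Γ' : ℚ) = (Nat.card Γ : ℚ) := by
    exact_mod_cast congrArg (Nat.cast : ℕ → ℚ) (Subgroup.index_mul_card Γ')
  have h2 : S = 1 - (Nat.card ↥Γ' : ℚ) * (Nat.card Γ : ℚ)⁻¹ := by
    have h3 := congrArg (fun t : ℚ => (Nat.card ↥Γ' : ℚ) * t) key
    simpa [mul_sub, ← mul_assoc, mul_inv_cancel₀ hN'] using h3
  have hq : ((Γ'.index : ℚ))⁻¹ = 1 - S := by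
    rw [h2, sub_sub_cancel, eq_mul_inv_iff_mul_eq₀ hN, ← hrel, ← mul_assoc,
      inv_mul_cancel₀ hI, one_mul]
  have hSden : ¬ p ∣ S.den := not_dvd_den_sum hp _ _ (fun γ _ => hint _)
  have h1S : ¬ p ∣ (1 - S).den := by
    intro hd
    have : (1 - S).den ∣ (1 : ℚ).den * (-S).den := by
      simpa [sub_eq_add_neg] using Rat.add_den_dvd 1 (-S)
    rw [Rat.one_den, one_mul, Rat.neg_den] at this
    exact hSden (hd.trans this)
  have hden : ((Γ'.index : ℚ))⁻¹.den = Γ'.index :=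
    Rat.inv_natCast_den_of_pos (Nat.pos_of_ne_zero hidx)
  rw [hq] at hden
  exact h1S (hden ▸ hdvd)
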